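/- Let T = ⟨x, y | [ā_k(x,y), ā_l(x,y)], k, l = 1, 2, …⟩ be the quotient of the free group F₂ on x and y by the normal closure of all commutators [c_k⁻¹ y c_k, c_l⁻¹ y c_l] for k, l ≥ 1, where c_i = (x y^i)² x⁻¹. Then there is an injective homomorphism from the free abelian group of countably infinite rank (the group of finitely supported functions ℕ → ℤ under addition) into the 2-generator group T which sends the i-th basis element to the image in T of the word ā_i(x,y) = c_i⁻¹ y c_i. -/

import Mathlib

/-- The free group of rank 2 on the generators `x` (index 0) and `y` (index 1). -/
abbrev F2 : Type := FreeGroup (Fin 2)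

/-- The generator `x` of `F₂`. -/
def xx : F2 := FreeGroup.of 0

/-- The generator `y` of `F₂`. -/
def yy : F2 := FreeGroup.of 1

/-- `c_i = (x y^i)² x⁻¹`. -/
def cc (i : ℕ) : F2 := (xx * yy ^ i) ^ 2 * xx⁻¹

/-- The shorter universal word `ā_i(x,y) = y^{c_i} = c_i⁻¹ y c_i`. -/
def aabar (i : ℕ) : F2 := (cc i)⁻¹ * yy * cc i

/-- The relators `[ā_k(x,y), ā_l(x,y)] = ā_k⁻¹ ā_l⁻¹ ā_k ā_l`, `k, l = 1, 2, …`, of the group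
`T_{ℤ^∞}`. -/
def Tcommrels : Set F2 :=
  {w | ∃ k l : ℕ, 1 ≤ k ∧ 1 ≤ l ∧
    w = (aabar k)⁻¹ * (aabar l)⁻¹ * aabar k * aabar l}


abbrev Mz := Multiplicative ℤ
def shiftAut (H : Type*) [Group H] : Mz →* MulAut (ℤ → H) where
  toFun n :=
    { toFun := fun f z => f (z + n.toAdd)
      invFun := fun f z => f (z - n.toAdd)
      left_inv := fun f => by funext z; simp
      right_inv := fun f => by funext z; simp
      map_mul' := fun f g => rfl }
  map_one' := by ext f z; simp
  map_mul' := fun a b => by ext f z; simp [add_assoc]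
@[simp] lemma shiftAut_inv_apply {H : Type*} [Group H] (n : Mz) (f : ℤ → H) (z : ℤ) :
    (shiftAut H n)⁻¹ f z = f (z - n.toAdd) := rfl

@[simp] lemma shiftAut_apply {H : Type*} [Group H] (n : Mz) (f : ℤ → H) (z : ℤ) :
    shiftAut H n f z = f (z + n.toAdd) := rfl
abbrev BB := (ℤ → Mz) ⋊[shiftAut Mz] Mz
abbrev GG := (ℤ → BB) ⋊[shiftAut BB] Mz
def tM : Mz := Multiplicative.ofAdd 1
def δfun (i : ℤ) : ℤ → Mz := fun w => if w = i then tM else 1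
def bB : BB := SemidirectProduct.inl (δfun 0)
def cB : BB := SemidirectProduct.inr tM
def Ef : ℤ → BB := fun z => if z = 0 then bB else if z = 1 then cB else 1
def Xg : GG := SemidirectProduct.inr tM
def Yg : GG := SemidirectProduct.inl Ef
def ψ : F2 →* GG := FreeGroup.lift (fun j => if j = 0 then Xg else Yg)
def Hfun (i : ℕ) : ℤ → BB := fun z =>
  if z = 1 then SemidirectProduct.inl (δfun i) else if z = 2 then cB else 1
lemma psi_xx : ψ xx = Xg := by simp [ψ, xx]
lemma psi_yy : ψ yy = Yg := by simp [ψ, yy]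

@[simp] lemma inl_pow_right {N G : Type*} [Group N] [Group G] (φ : G →* MulAut N) (n : N) (i : ℕ) :
    ((SemidirectProduct.inl n : N ⋊[φ] G) ^ i).right = 1 := by
  rw [← map_pow, SemidirectProduct.right_inl]

@[simp] lemma inl_pow_left {N G : Type*} [Group N] [Group G] (φ : G →* MulAut N) (n : N) (i : ℕ) :
    ((SemidirectProduct.inl n : N ⋊[φ] G) ^ i).left = n ^ i := by
  rw [← map_pow, SemidirectProduct.left_inl]

lemma psi_aabar (i : ℕ) : ψ (aabar i) = SemidirectProduct.inl (Hfun i) := by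
  have hYi : ψ (yy ^ i) = SemidirectProduct.inl (Ef ^ i) := by
    rw [map_pow, psi_yy, Yg, ← map_pow]
  rw [aabar, cc, sq]
  simp only [map_mul, map_inv, psi_xx, psi_yy, hYi]
  apply SemidirectProduct.ext
  · -- left components
    simp only [SemidirectProduct.mul_left, SemidirectProduct.mul_right,
      SemidirectProduct.inv_left, SemidirectProduct.inv_right, sq,
      SemidirectProduct.left_inl, SemidirectProduct.right_inl,
      SemidirectProduct.left_inr, SemidirectProduct.right_inr,
      map_one, map_mul, map_inv, one_mul, mul_one, MulAut.one_apply]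
    funext z
    simp only [Xg, Yg, SemidirectProduct.left_inl, SemidirectProduct.right_inl, SemidirectProduct.left_inr, SemidirectProduct.right_inr, -- x
      ← map_inv, ← map_mul, map_one, MulAut.one_apply, one_mul, mul_one, inv_one,
      shiftAut_apply, Pi.mul_apply, Pi.inv_apply, Pi.pow_apply, Pi.one_apply, one_pow,
      tM, toAdd_ofAdd, ofAdd_add, ofAdd_neg, toAdd_inv, toAdd_mul]
    have e0 : z + -(1 + 1 + -1 : ℤ) = z - 1 := by ring
    rw [e0]
    by_cases hz1 : z = 1
    · subst hz1
      norm_num [Ef, Hfun]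
      have hpow : cB ^ i = SemidirectProduct.inr (tM ^ i) := by rw [cB, ← map_pow]
      rw [hpow, bB, ← map_inv, ← SemidirectProduct.inl_aut_inv]
      congr 1
      funext w
      have : ((tM : Mz) ^ i).toAdd = (i : ℤ) := by
        simp [tM, toAdd_pow]
      rw [shiftAut_inv_apply, this]
      simp only [δfun, sub_eq_zero]
    · by_cases hz2 : z = 2
      · subst hz2
        norm_num [Ef, Hfun]
      · have n0 : z - 1 ≠ 0 := by omega
        have n1 : z - 1 ≠ 1 := by omega
        have mid : Ef (z - 1) = 1 := by simp [Ef, n0, n1]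
        have hH : Hfun i z = 1 := by simp [Hfun, hz1, hz2]
        rw [mid, hH]
        group
  · simp [SemidirectProduct.mul_right, SemidirectProduct.inv_right, Xg, Yg]

lemma Hfun_comm (k l : ℕ) : Hfun k * Hfun l = Hfun l * Hfun k := by
  funext z
  simp only [Pi.mul_apply, Hfun]
  split_ifs <;> try rfl
  rw [← map_mul, ← map_mul, mul_comm]

lemma psi_comm (k l : ℕ) : ψ (aabar k) * ψ (aabar l) = ψ (aabar l) * ψ (aabar k) := by
  rw [psi_aabar, psi_aabar, ← map_mul, ← map_mul, Hfun_comm]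

lemma rels_ker : Tcommrels ⊆ (ψ.ker : Set F2) := by
  rintro w ⟨k, l, hk, hl, rfl⟩
  have h := psi_comm k l
  simp only [SetLike.mem_coe, MonoidHom.mem_ker, map_mul, map_inv]
  rw [mul_assoc, h]
  group

abbrev Tq := F2 ⧸ Subgroup.normalClosure Tcommrels

def ψbar : Tq →* GG :=
  QuotientGroup.lift _ ψ fun w hw =>
    Subgroup.normalClosure_le_normal rels_ker hw

lemma mkcomm (k l : ℕ) (hk : 1 ≤ k) (hl : 1 ≤ l) :
    (QuotientGroup.mk (aabar k) : Tq) * QuotientGroup.mk (aabar l)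
      = QuotientGroup.mk (aabar l) * QuotientGroup.mk (aabar k) := by
  have hrel : (aabar k)⁻¹ * (aabar l)⁻¹ * aabar k * aabar l
      ∈ Subgroup.normalClosure Tcommrels :=
    Subgroup.subset_normalClosure ⟨k, l, hk, hl, rfl⟩
  have h1 : (QuotientGroup.mk ((aabar k)⁻¹ * (aabar l)⁻¹ * aabar k * aabar l) : Tq) = 1 :=
    (QuotientGroup.eq_one_iff _).mpr hrel
  rw [QuotientGroup.mk_mul, QuotientGroup.mk_mul, QuotientGroup.mk_mul,
    QuotientGroup.mk_inv, QuotientGroup.mk_inv] at h1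
  calc (QuotientGroup.mk (aabar k) : Tq) * QuotientGroup.mk (aabar l)
      = QuotientGroup.mk (aabar l) * QuotientGroup.mk (aabar k) *
        ((QuotientGroup.mk (aabar k) : Tq)⁻¹ * (QuotientGroup.mk (aabar l))⁻¹ *
          QuotientGroup.mk (aabar k) * QuotientGroup.mk (aabar l)) := by group
    _ = QuotientGroup.mk (aabar l) * QuotientGroup.mk (aabar k) := by rw [h1, mul_one]

def aT (i : ℕ) : Tq := QuotientGroup.mk (aabar (i + 1))

lemma aT_comm (i j : ℕ) : aT i * aT j = aT j * aT i :=
  mkcomm _ _ (by omega) (by omega)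

def Kgrp : Subgroup Tq := Subgroup.closure (Set.range aT)

noncomputable instance : CommGroup Kgrp :=
  Subgroup.closureCommGroupOfComm (by rintro x ⟨i, rfl⟩ y ⟨j, rfl⟩; exact aT_comm i j)

def aK (i : ℕ) : Kgrp := ⟨aT i, Subgroup.subset_closure ⟨i, rfl⟩⟩

noncomputable def Fadd : (ℕ →₀ ℤ) →+ Additive Kgrp :=
  Finsupp.liftAddHom fun i => zmultiplesHom (Additive Kgrp) (Additive.ofMul (aK i))

noncomputable def φ0 : Multiplicative (ℕ →₀ ℤ) →* Tq :=
  Kgrp.subtype.comp (AddMonoidHom.toMultiplicativeLeft Fadd)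

lemma φ0_single (i : ℕ) :
    φ0 (Multiplicative.ofAdd (Finsupp.single i (1 : ℤ))) = aT i := by
  show ((Additive.toMul (Fadd (Finsupp.single i (1 : ℤ))) : Kgrp) : Tq) = aT i
  have hF : Fadd (Finsupp.single i (1 : ℤ)) = zmultiplesHom (Additive Kgrp) (Additive.ofMul (aK i)) 1 :=
    Finsupp.liftAddHom_apply_single _ _ _
  rw [hF]
  simp [aK]

def efunp (f : ℕ →₀ ℤ) : ℤ → Mz :=
  fun w => Multiplicative.ofAdd (if 1 ≤ w then f ((w - 1).toNat) else 0)

lemma efunp_zero : efunp 0 = 1 := by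
  funext w
  simp [efunp]

lemma efunp_add (f g : ℕ →₀ ℤ) : efunp (f + g) = efunp f * efunp g := by
  funext w
  simp only [efunp, Pi.mul_apply, Finsupp.add_apply]
  split_ifs <;> simp [ofAdd_add]

noncomputable def totHom : (ℕ →₀ ℤ) →+ ℤ :=
  Finsupp.liftAddHom fun _ => AddMonoidHom.id ℤ

noncomputable def μ : Multiplicative (ℕ →₀ ℤ) →* GG where
  toFun f := SemidirectProduct.inl (fun z =>
    if z = 1 then SemidirectProduct.inl (efunp f.toAdd)
    else if z = 2 then cB ^ totHom f.toAdd else 1)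
  map_one' := by
    rw [← map_one (SemidirectProduct.inl (φ := shiftAut BB))]
    congr 1
    funext z
    split_ifs <;> simp [efunp_zero]
  map_mul' f g := by
    rw [← map_mul]
    congr 1
    funext z
    simp only [Pi.mul_apply]
    split_ifs with h1 h2
    · rw [toAdd_mul, efunp_add, map_mul]
    · rw [toAdd_mul, map_add, zpow_add]
    · rw [mul_one]

lemma μ_apply (f : Multiplicative (ℕ →₀ ℤ)) :
    μ f = SemidirectProduct.inl (fun z =>
      if z = 1 then SemidirectProduct.inl (efunp f.toAdd)
      else if z = 2 then cB ^ totHom f.toAdd else 1) := rfl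

lemma monoidHom_ext {F G : Multiplicative (ℕ →₀ ℤ) →* GG}
    (h : ∀ i, F (Multiplicative.ofAdd (Finsupp.single i (1 : ℤ)))
      = G (Multiplicative.ofAdd (Finsupp.single i (1 : ℤ)))) : F = G := by
  have h' : MonoidHom.toAdditiveRight F = MonoidHom.toAdditiveRight G := by
    apply Finsupp.addHom_ext'
    intro i
    apply AddMonoidHom.ext_int
    simpa using h i
  exact MonoidHom.toAdditiveRight.injective h'

lemma efunp_single (i : ℕ) : efunp (Finsupp.single i (1 : ℤ)) = δfun ((i : ℤ) + 1) := by
  funext w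
  simp only [efunp, δfun]
  by_cases hw : w = (i : ℤ) + 1
  · subst hw
    rw [if_pos (by omega : (1 : ℤ) ≤ (i : ℤ) + 1), if_pos rfl]
    have h2 : (((i : ℤ) + 1) - 1).toNat = i := by omega
    rw [h2, Finsupp.single_eq_same]
    rfl
  · rw [if_neg hw]
    by_cases h1w : (1 : ℤ) ≤ w
    · rw [if_pos h1w]
      have hne : i ≠ (w - 1).toNat := by omega
      rw [Finsupp.single_eq_of_ne hne.symm]
      rfl
    · rw [if_neg h1w]
      rfl

lemma tot_single (i : ℕ) : totHom (Finsupp.single i (1 : ℤ)) = 1 := by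
  rw [totHom, Finsupp.liftAddHom_apply_single]
  rfl

lemma χ_eq : ψbar.comp φ0 = μ := by
  apply monoidHom_ext
  intro i
  rw [MonoidHom.comp_apply, φ0_single]
  have hl : ψbar (aT i) = SemidirectProduct.inl (Hfun (i + 1)) := by
    rw [aT, ψbar, QuotientGroup.lift_mk']
    exact psi_aabar (i + 1)
  rw [hl, μ_apply]
  refine congrArg _ (funext fun z => ?_)
  simp only [toAdd_ofAdd]
  by_cases hz1 : z = 1
  · subst hz1
    rw [if_pos rfl]
    have : Hfun (i + 1) 1 = SemidirectProduct.inl (δfun ((i : ℤ) + 1)) := by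
      simp only [Hfun, if_pos rfl]
      norm_cast
    rw [this, efunp_single]
  · by_cases hz2 : z = 2
    · subst hz2
      rw [if_neg hz1, if_pos rfl, tot_single, zpow_one]
      norm_num [Hfun]
    · rw [if_neg hz1, if_neg hz2]
      simp [Hfun, hz1, hz2]

lemma μ_inj : Function.Injective μ := by
  refine (injective_iff_map_eq_one μ).mpr ?_
  intro f hf
  rw [μ_apply] at hf
  have h1 : (fun z : ℤ =>
      if z = 1 then SemidirectProduct.inl (φ := shiftAut Mz) (efunp f.toAdd)
      else if z = 2 then cB ^ totHom f.toAdd else 1) = 1 := by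
    apply SemidirectProduct.inl_injective (φ := shiftAut BB)
    rw [map_one]
    exact hf
  have h2 : SemidirectProduct.inl (φ := shiftAut Mz) (efunp f.toAdd) = 1 := by
    have := congrFun h1 1
    simpa using this
  have h3 : efunp f.toAdd = 1 := by
    apply SemidirectProduct.inl_injective (φ := shiftAut Mz)
    rw [map_one]
    exact h2
  have h4 : f.toAdd = 0 := by
    ext i
    have hc := congrFun h3 ((i : ℤ) + 1)
    simp only [efunp, Pi.one_apply] at hc
    have h1' : (1 : ℤ) ≤ (i : ℤ) + 1 := by omega
    have h2' : (((i : ℤ) + 1) - 1).toNat = i := by omega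
    rw [if_pos h1', h2'] at hc
    simpa using hc
  calc f = Multiplicative.ofAdd f.toAdd := rfl
    _ = Multiplicative.ofAdd 0 := by rw [h4]
    _ = 1 := rfl


/-- **Example (embedding of ℤ^∞).**  There is an injective homomorphism of the free abelian
group of countably infinite rank (the additive group `ℕ →₀ ℤ` of finitely supported functions)
into the 2-generator group `T = ⟨x, y | [ā_k(x,y), ā_l(x,y)], k, l = 1, 2, …⟩` which sends the
`i`-th basis element (the indicator function at `i`, corresponding to `ā_{i+1}`) to the image in
`T` of the word `ā_{i+1}(x,y)`. -/
theorem free_abelian_embed :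
    ∃ φ : Multiplicative (ℕ →₀ ℤ) →* F2 ⧸ Subgroup.normalClosure Tcommrels,
      Function.Injective φ ∧
      ∀ i : ℕ,
        φ (Multiplicative.ofAdd (Finsupp.single i (1 : ℤ)))
          = QuotientGroup.mk (aabar (i + 1)) := by
  refine ⟨φ0, ?_, ?_⟩
  · apply Function.Injective.of_comp (f := ⇑ψbar)
    rw [show ⇑ψbar ∘ ⇑φ0 = ⇑(ψbar.comp φ0) from rfl, χ_eq]
    exact μ_inj
  · intro i
    rw [φ0_single]
    rfl
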